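/- For a prime ℓ, the number of matrices A in GL₂(𝔽_ℓ) with det(I - A) = 0 equals (ℓ-2)(ℓ²+ℓ) + ℓ². -/

import Mathlib

open Finset

variable {ℓ : ℕ} [Fact ℓ.Prime]

abbrev F (ℓ : ℕ) := ZMod ℓ

def matEquiv : Matrix (Fin 2) (Fin 2) (F ℓ) ≃ (F ℓ × F ℓ) × (F ℓ × F ℓ) where
  toFun A := ((A 0 0, A 1 1), (A 0 1, A 1 0))
  invFun x := !![x.1.1, x.2.1; x.2.2, x.1.2]
  left_inv A := (Matrix.eta_fin_two A).symm
  right_inv x := by simp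

lemma cond_iff (A : Matrix (Fin 2) (Fin 2) (F ℓ)) :
    (IsUnit A ∧ (1 - A).det = 0) ↔
      (A 0 0 + A 1 1 ≠ 1 ∧ A 0 1 * A 1 0 = (1 - A 0 0) * (1 - A 1 1)) := by
  have hdet : (1 - A).det = (1 - A 0 0) * (1 - A 1 1) - A 0 1 * A 1 0 := by
    rw [Matrix.det_fin_two]
    simp [Matrix.sub_apply, Matrix.one_apply]
  rw [Matrix.isUnit_iff_isUnit_det, isUnit_iff_ne_zero, Matrix.det_fin_two, hdet,
    sub_eq_zero]
  set a := A 0 0; set b := A 0 1; set c := A 1 0; set d := A 1 1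
  constructor
  · rintro ⟨h1, h2⟩
    refine ⟨fun h => h1 ?_, h2.symm⟩
    linear_combination h2 + h
  · rintro ⟨h1, h2⟩
    refine ⟨fun h => h1 ?_, h2.symm⟩
    linear_combination h + h2

lemma card_F : Fintype.card (F ℓ) = ℓ := ZMod.card ℓ

lemma two_le : 2 ≤ ℓ := (Fact.out : ℓ.Prime).two_le

lemma card_nonzero : Fintype.card {u : F ℓ // u ≠ 0} = ℓ - 1 := by
  rw [Fintype.card_subtype_compl, Fintype.card_subtype_eq, card_F]

lemma card_mul_eq (x : F ℓ) :
    Fintype.card {q : F ℓ × F ℓ // q.1 * q.2 = x} =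
      if x = 0 then 2 * ℓ - 1 else ℓ - 1 := by
  split_ifs with hx
  · subst hx
    have e1 : {q : F ℓ × F ℓ // ¬ q.1 * q.2 = 0} ≃ {u : F ℓ // u ≠ 0} × {u : F ℓ // u ≠ 0} :=
      (Equiv.subtypeEquivRight (p := fun q : F ℓ × F ℓ => ¬ q.1 * q.2 = 0)
        (q := fun q => q.1 ≠ 0 ∧ q.2 ≠ 0) (fun q => mul_ne_zero_iff)).trans
        (Equiv.subtypeProdEquivProd (p := fun a : F ℓ => a ≠ 0) (q := fun a : F ℓ => a ≠ 0))
    have e0 : {q : F ℓ × F ℓ // q.1 * q.2 = 0} ≃ {q : F ℓ × F ℓ // ¬ ¬ q.1 * q.2 = 0} :=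
      Equiv.subtypeEquivRight (fun q => (not_not (a := q.1 * q.2 = 0)).symm)
    rw [Fintype.card_congr e0, Fintype.card_subtype_compl, Fintype.card_congr e1]
    rw [Fintype.card_prod, Fintype.card_prod, card_nonzero, card_F]
    obtain ⟨n, rfl⟩ : ∃ n, ℓ = n + 2 := ⟨ℓ - 2, by have := two_le (ℓ := ℓ); omega⟩
    have e1 : (n+2) * (n+2) = n*n + 4*n + 4 := by ring
    have e2 : (n+1) * (n+1) = n*n + 2*n + 1 := by ring
    have e3 : n+2-1 = n+1 := rfl
    rw [e3, e1, e2]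
    omega
  · rw [Fintype.card_congr (?_ : {q : F ℓ × F ℓ // q.1 * q.2 = x} ≃ {u : F ℓ // u ≠ 0}),
      card_nonzero]
    refine ⟨fun q => ⟨q.1.1, fun h => hx (by rw [← q.2, h, zero_mul])⟩,
      fun u => ⟨(u.1, u.1⁻¹ * x), by rw [← mul_assoc, mul_inv_cancel₀ u.2, one_mul]⟩, ?_, ?_⟩
    · rintro ⟨⟨u, v⟩, h⟩
      have hu : u ≠ 0 := fun h0 => hx (by rw [← h, h0, zero_mul])
      ext
      · rfl
      · show u⁻¹ * x = v
        rw [← h, ← mul_assoc, inv_mul_cancel₀ hu, one_mul]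
    · rintro ⟨u, hu⟩; rfl

lemma card_line :
    (Finset.univ.filter (fun p : F ℓ × F ℓ => p.1 + p.2 = 1)).card = ℓ := by
  have : Finset.univ.filter (fun p : F ℓ × F ℓ => p.1 + p.2 = 1) =
      Finset.univ.image (fun a : F ℓ => (a, 1 - a)) := by
    ext ⟨u, v⟩
    simp only [Finset.mem_filter, Finset.mem_univ, true_and, Finset.mem_image,
      Prod.mk.injEq]
    constructor
    · intro h
      exact ⟨u, rfl, by linear_combination -h⟩
    · rintro ⟨a, rfl, rfl⟩
      ring
  rw [this, Finset.card_image_of_injective _ (fun a b h => (Prod.mk.injEq _ _ _ _).mp h |>.1),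
    Finset.card_univ, card_F]

lemma card_cross :
    (Finset.univ.filter (fun p : F ℓ × F ℓ =>
      (1 - p.1) * (1 - p.2) = 0 ∧ ¬ p.1 + p.2 = 1)).card = 2 * ℓ - 3 := by
  have hkey : Finset.univ.filter (fun p : F ℓ × F ℓ =>
      (1 - p.1) * (1 - p.2) = 0 ∧ ¬ p.1 + p.2 = 1) =
      ({1} ×ˢ (Finset.univ \ {0})) ∪ ((Finset.univ \ {0, 1}) ×ˢ {1}) := by
    ext ⟨u, v⟩
    simp only [Finset.mem_filter, Finset.mem_univ, true_and, Finset.mem_union,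
      Finset.mem_product, Finset.mem_sdiff, Finset.mem_singleton, Finset.mem_insert,
      mul_eq_zero, sub_eq_zero, not_or]
    constructor
    · rintro ⟨h1, h2⟩
      by_cases hu : u = 1
      · left
        exact ⟨hu, fun hv => h2 (by rw [hu, hv, add_zero])⟩
      · right
        have hv : v = 1 := by
          rcases h1 with h | h
          · exact absurd h.symm hu
          · exact h.symm
        exact ⟨⟨fun h0 => h2 (by rw [h0, hv, zero_add]), hu⟩, hv⟩
    · rintro (⟨hu, hv⟩ | ⟨⟨hu0, hu1⟩, hv⟩)
      · refine ⟨Or.inl hu.symm, fun h => hv ?_⟩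
        rw [hu] at h
        linear_combination h
      · refine ⟨Or.inr hv.symm, fun h => hu0 ?_⟩
        rw [hv] at h
        linear_combination h
  rw [hkey, Finset.card_union_of_disjoint, Finset.card_product, Finset.card_product,
    Finset.card_singleton, Finset.card_sdiff_of_subset (Finset.subset_univ _),
    Finset.card_sdiff_of_subset (Finset.subset_univ _), Finset.card_univ, card_F,
    Finset.card_singleton, Finset.card_insert_of_notMem (by simp), Finset.card_singleton]
  · have := two_le (ℓ := ℓ)
    omega
  · rw [Finset.disjoint_left]
    rintro ⟨u, v⟩ h1 h2
    simp only [Finset.mem_product, Finset.mem_singleton, Finset.mem_sdiff,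
      Finset.mem_insert, not_or] at h1 h2
    exact h2.1.2.2 h1.1

/-- For a prime `ℓ`, the number of matrices `A ∈ GL₂(𝔽_ℓ)` with `det(I - A) = 0`
equals `(ℓ-2)(ℓ²+ℓ) + ℓ²`. -/
theorem stmt_1 (ℓ : ℕ) [Fact ℓ.Prime] :
    (Nat.card {A : Matrix (Fin 2) (Fin 2) (ZMod ℓ) //
        IsUnit A ∧ (1 - A).det = 0} : ℤ) =
      ((ℓ : ℤ) - 2) * ((ℓ : ℤ) ^ 2 + ℓ) + (ℓ : ℤ) ^ 2 := by
  classical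
  have hl2 := two_le (ℓ := ℓ)
  set L : ℤ := (ℓ : ℤ) with hL
  -- step 1: to quadruples
  have h0 : Nat.card {A : Matrix (Fin 2) (Fin 2) (ZMod ℓ) //
        IsUnit A ∧ (1 - A).det = 0} =
      Fintype.card {x : (F ℓ × F ℓ) × (F ℓ × F ℓ) //
        x.1.1 + x.1.2 ≠ 1 ∧ x.2.1 * x.2.2 = (1 - x.1.1) * (1 - x.1.2)} := by
    rw [Nat.card_eq_fintype_card]
    exact Fintype.card_congr (Equiv.subtypeEquiv matEquiv
      (fun A => by simpa [matEquiv] using cond_iff A))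
  -- step 2: sigma decomposition
  have h1 : Fintype.card {x : (F ℓ × F ℓ) × (F ℓ × F ℓ) //
        x.1.1 + x.1.2 ≠ 1 ∧ x.2.1 * x.2.2 = (1 - x.1.1) * (1 - x.1.2)} =
      ∑ p : F ℓ × F ℓ, Fintype.card {q : F ℓ × F ℓ //
        p.1 + p.2 ≠ 1 ∧ q.1 * q.2 = (1 - p.1) * (1 - p.2)} := by
    rw [Fintype.card_congr (Equiv.subtypeProdEquivSigmaSubtype
      (fun (p q : F ℓ × F ℓ) => p.1 + p.2 ≠ 1 ∧ q.1 * q.2 = (1 - p.1) * (1 - p.2)))]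
    rw [Fintype.card_sigma]
  -- step 3: inner card in ℤ
  have h2 : ∀ p : F ℓ × F ℓ, (Fintype.card {q : F ℓ × F ℓ //
        p.1 + p.2 ≠ 1 ∧ q.1 * q.2 = (1 - p.1) * (1 - p.2)} : ℤ) =
      (L - 1) + (if p.1 + p.2 = 1 then 1 - L else 0) +
        (if (1 - p.1) * (1 - p.2) = 0 ∧ ¬ p.1 + p.2 = 1 then L else 0) := by
    intro p
    by_cases h : p.1 + p.2 = 1
    · have : IsEmpty {q : F ℓ × F ℓ //
          p.1 + p.2 ≠ 1 ∧ q.1 * q.2 = (1 - p.1) * (1 - p.2)} :=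
        ⟨fun q => q.2.1 h⟩
      rw [Fintype.card_eq_zero, if_pos h, if_neg (fun hc => hc.2 h)]
      push_cast
      ring
    · have e : {q : F ℓ × F ℓ // p.1 + p.2 ≠ 1 ∧ q.1 * q.2 = (1 - p.1) * (1 - p.2)} ≃
          {q : F ℓ × F ℓ // q.1 * q.2 = (1 - p.1) * (1 - p.2)} :=
        Equiv.subtypeEquivRight (fun q => and_iff_right h)
      rw [Fintype.card_congr e, _root_.card_mul_eq, if_neg h]
      by_cases h2 : (1 - p.1) * (1 - p.2) = 0
      · rw [if_pos h2, if_pos ⟨h2, h⟩, Nat.cast_sub (by omega)]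
        push_cast
        ring
      · rw [if_neg h2, if_neg (fun hc => h2 hc.1), Nat.cast_sub (by omega)]
        push_cast
        ring
  rw [h0, h1]
  push_cast
  rw [Finset.sum_congr rfl (fun p _ => h2 p)]
  simp only [Finset.sum_add_distrib, Finset.sum_const, Finset.sum_ite,
    Finset.sum_const_zero, smul_zero, add_zero, nsmul_eq_mul, smul_eq_mul,
    Finset.card_univ, Fintype.card_prod, card_F, card_line, card_cross]
  have hcast : ((2 * ℓ - 3 : ℕ) : ℤ) = 2 * L - 3 := by
    rw [Nat.cast_sub (by omega)]
    push_cast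
    ring
  rw [hcast]
  push_cast
  ring
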